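/- The function J̃ : ℝ → ℝ defined by J̃(v) = (1/4)v² + (1/2)(1 − sgn(v)v⁴)² has a local minimizer at v = 0. -/
import Mathlib

/-- Transformed scalar objective `J̃(v) = (1/4)v² + (1/2)(1 - sgn(v)v⁴)²`. -/
noncomputable def Jt (v : ℝ) : ℝ :=
  1 / 4 * v ^ 2 + 1 / 2 * (1 - Real.sign v * v ^ 4) ^ 2

theorem transformed_lhalf_local_min_at_zero :
    ∃ ε > (0 : ℝ), ∀ w : ℝ, |w - 0| < ε → Jt 0 ≤ Jt w := by
  refine ⟨1/2, by norm_num, fun w hw => ?_⟩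
  rw [sub_zero, abs_lt] at hw
  simp only [Jt, Real.sign_zero]
  rcases lt_trichotomy w 0 with h | h | h
  · rw [Real.sign_of_neg h]; nlinarith [sq_nonneg w, sq_nonneg (w^2)]
  · simp [h]
  · rw [Real.sign_of_pos h]
    have h2 : w ^ 2 < 1 / 4 := by nlinarith [hw.1, hw.2]
    nlinarith [sq_nonneg w, pow_pos h 6, sq_nonneg (w^3), mul_pos (mul_pos h h) (sub_pos.2 h2)]
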